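/- arXiv:1912.06278 — 2 statements merged into one kernel-verified Lean document; each statement's English description precedes it below -/
import Mathlib

section
/- Let τ ∈ (0,1) and let B^{(0)}, B^{(1)}, B^{(2)}, … be a sequence of bases of the same full-rank lattice Λ in ℝ^n where B^{(m+1)} is obtained from B^{(m)} by replacing one column b_i by b_i − s for some s ∈ Λ(B^{(m)}_{[n]∖i}) with ‖b_i − s‖² < τ‖b_i‖² (an effective SR update). Then the number of steps that update a given column i is at most log_{1/τ}( ‖b_i^{(0)}‖² / λ_1(B^{(0)})² ); in particular, the total number of effective updates is finite and at most Σ_{i=1}^n log_{1/τ}( ‖b_i^{(0)}‖² / λ_1(B^{(0)})² ). -/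
open Finset

noncomputable section

/-- `ℝ^n` with the Euclidean norm. -/
abbrev Euc (n : ℕ) := EuclideanSpace ℝ (Fin n)

/-- The lattice generated by the columns `B 1, …, B n`. -/
def lattice {n : ℕ} (B : Fin n → Euc n) : Set (Euc n) :=
  {v | ∃ c : Fin n → ℤ, v = ∑ i, (c i : ℝ) • B i}

/-- The sublattice generated by all the columns of `B` except the `i`-th one. -/
def subLattice {n : ℕ} (B : Fin n → Euc n) (i : Fin n) : Set (Euc n) :=
  {v | ∃ c : Fin n → ℤ, c i = 0 ∧ v = ∑ j, (c j : ℝ) • B j}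

/-- The `k`-th successive minimum `λ_k(B)` of the lattice generated by `B`. -/
def succMin {n : ℕ} (B : Fin n → Euc n) (k : ℕ) : ℝ :=
  sInf {r : ℝ | ∃ v : Fin k → Euc n, (∀ j, v j ∈ lattice B) ∧
    LinearIndependent ℝ v ∧ ∀ j, ‖v j‖ ≤ r}

lemma mem_lattice_iff {n : ℕ} {B : Fin n → Euc n} {v : Euc n} :
    v ∈ lattice B ↔ v ∈ Submodule.span ℤ (Set.range B) := by
  rw [Submodule.mem_span_range_iff_exists_fun]
  constructor
  · rintro ⟨c, rfl⟩
    exact ⟨c, by simp [Int.cast_smul_eq_zsmul]⟩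
  · rintro ⟨c, rfl⟩
    exact ⟨c, by simp [Int.cast_smul_eq_zsmul]⟩

lemma lattice_subset {n : ℕ} {B C : Fin n → Euc n} (h : ∀ j, B j ∈ lattice C) :
    lattice B ⊆ lattice C := by
  intro v hv
  rw [mem_lattice_iff] at hv ⊢
  refine Submodule.span_le.mpr ?_ hv
  rintro _ ⟨j, rfl⟩
  exact mem_lattice_iff.mp (h j)

lemma subLattice_subset {n : ℕ} (B : Fin n → Euc n) (i : Fin n) :
    subLattice B i ⊆ lattice B := by
  rintro v ⟨c, _, rfl⟩
  exact ⟨c, rfl⟩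

lemma self_mem_lattice {n : ℕ} (B : Fin n → Euc n) (i : Fin n) : B i ∈ lattice B :=
  mem_lattice_iff.mpr (Submodule.subset_span ⟨i, rfl⟩)

lemma sub_mem_lattice {n : ℕ} {B : Fin n → Euc n} {v w : Euc n}
    (hv : v ∈ lattice B) (hw : w ∈ lattice B) : v - w ∈ lattice B := by
  rw [mem_lattice_iff] at hv hw ⊢
  exact Submodule.sub_mem _ hv hw

lemma succMin_one_le {n : ℕ} {B : Fin n → Euc n} {v : Euc n}
    (hv : v ∈ lattice B) (hv0 : v ≠ 0) : succMin B 1 ≤ ‖v‖ := by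
  apply csInf_le
  · refine ⟨0, fun r hr => ?_⟩
    obtain ⟨w, _, _, hle⟩ := hr
    exact le_trans (norm_nonneg (w 0)) (hle 0)
  · exact ⟨fun _ => v, fun _ => hv, linearIndependent_unique_iff.mpr hv0, fun _ => le_rfl⟩

lemma succMin_one_pos {n : ℕ} {B : Fin n → Euc n} (hB : LinearIndependent ℝ B)
    (i : Fin n) : 0 < succMin B 1 := by
  have : Nonempty (Fin n) := ⟨i⟩
  set b : Module.Basis (Fin n) ℝ (Euc n) :=
    basisOfLinearIndependentOfCardEqFinrank hB (by simp [finrank_euclideanSpace_fin])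
  have hrange : Set.range B = Set.range b := by
    rw [show ⇑b = B from coe_basisOfLinearIndependentOfCardEqFinrank hB _]
  have hdisc : DiscreteTopology (Submodule.span ℤ (Set.range B)) := by
    rw [hrange]; infer_instance
  set L := Submodule.span ℤ (Set.range B)
  have hopen : IsOpen ({0} : Set L) := isOpen_discrete _
  obtain ⟨ε, hε, hball⟩ := Metric.isOpen_iff.mp hopen 0 rfl
  have hsmall : ∀ w : Euc n, w ∈ lattice B → ‖w‖ < ε → w = 0 := by
    intro w hw hwε
    have hwL : w ∈ L := mem_lattice_iff.mp hw
    have : (⟨w, hwL⟩ : L) ∈ Metric.ball (0 : L) ε := by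
      rw [mem_ball_zero_iff]
      exact hwε
    have := hball this
    simpa [Submodule.mk_eq_zero] using this
  refine lt_of_lt_of_le hε (le_csInf ?_ ?_)
  · exact ⟨‖B i‖, fun _ => B i, fun _ => self_mem_lattice B i,
      linearIndependent_unique_iff.mpr (hB.ne_zero i), fun _ => le_rfl⟩
  · rintro r ⟨w, hmem, hli, hle⟩
    by_contra hlt
    push_neg at hlt
    have h0 : w 0 ≠ 0 := hli.ne_zero 0
    exact h0 (hsmall _ (hmem 0) (lt_of_le_of_lt (hle 0) hlt))

lemma update_linearIndependent {n : ℕ} {D : Fin n → Euc n} (hD : LinearIndependent ℝ D)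
    (i0 : Fin n) (c : Fin n → ℤ) (hc : c i0 = 0) :
    LinearIndependent ℝ (Function.update D i0 (D i0 - ∑ j, (c j : ℝ) • D j)) := by
  rw [Fintype.linearIndependent_iff] at hD ⊢
  intro g hg
  have expand : ∀ j, g j • Function.update D i0 (D i0 - ∑ k, (c k : ℝ) • D k) j
      = g j • D j - (if j = i0 then g i0 • ∑ k, (c k : ℝ) • D k else 0) := by
    intro j
    by_cases h : j = i0
    · subst h; simp [smul_sub]
    · simp [Function.update_of_ne h, h]
  rw [Finset.sum_congr rfl (fun j _ => expand j), Finset.sum_sub_distrib,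
    Finset.sum_ite_eq' Finset.univ i0 (fun _ => g i0 • ∑ k, (c k : ℝ) • D k)] at hg
  simp only [Finset.mem_univ, if_true, Finset.smul_sum] at hg
  have key : ∑ j, (g j - g i0 * (c j : ℝ)) • D j = 0 := by
    simp only [sub_smul, Finset.sum_sub_distrib, mul_smul]
    exact hg
  have hz := hD _ key
  have hgi0 : g i0 = 0 := by have := hz i0; simpa [hc] using this
  intro j
  have := hz j
  rw [hgi0] at this
  simpa using this

/-- `B` is SR-CVP reduced if no vector of the sublattice generated by the other basis
vectors can shorten a basis vector. -/
def SRCVPReduced {n : ℕ} (B : Fin n → Euc n) : Prop :=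
  ∀ i : Fin n, ∀ s ∈ subLattice B i, ‖B i‖ ≤ ‖B i - s‖

theorem sr_number_of_updates_bound {n : ℕ} (τ : ℝ) (hτ0 : 0 < τ) (hτ1 : τ < 1)
    (M : ℕ) (B : ℕ → Fin n → Euc n) (hlin : LinearIndependent ℝ (B 0))
    (idx : ℕ → Fin n) (s : ℕ → Euc n)
    (hstep : ∀ m < M, s m ∈ subLattice (B m) (idx m) ∧
      B (m + 1) = Function.update (B m) (idx m) (B m (idx m) - s m) ∧
      ‖B m (idx m) - s m‖ ^ 2 < τ * ‖B m (idx m)‖ ^ 2) :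
    (∀ i : Fin n,
      ((((Finset.range M).filter fun m => idx m = i).card : ℝ) ≤
        Real.logb (1 / τ) (‖B 0 i‖ ^ 2 / succMin (B 0) 1 ^ 2))) ∧
      (M : ℝ) ≤ ∑ i : Fin n, Real.logb (1 / τ) (‖B 0 i‖ ^ 2 / succMin (B 0) 1 ^ 2) := by
  classical
  have hb : (1 : ℝ) < 1 / τ := (one_lt_div hτ0).mpr hτ1
  -- the main invariant
  have key : ∀ m, m ≤ M → LinearIndependent ℝ (B m) ∧ (∀ j, B m j ∈ lattice (B 0)) ∧
      ∀ i, ‖B m i‖ ^ 2 ≤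
        τ ^ (((Finset.range m).filter fun t => idx t = i).card) * ‖B 0 i‖ ^ 2 := by
    intro m
    induction m with
    | zero =>
      intro _
      exact ⟨hlin, fun j => self_mem_lattice _ j, fun i => by simp⟩
    | succ m ih =>
      intro hm
      obtain ⟨hli, hmem, hnorm⟩ := ih (le_of_lt (Nat.lt_of_succ_le hm))
      obtain ⟨hs, hB1, hdec⟩ := hstep m (Nat.lt_of_succ_le hm)
      have hs' := hs
      obtain ⟨c, hc0, hsc⟩ := hs'
      have hsub : s m ∈ lattice (B 0) :=
        lattice_subset hmem (subLattice_subset (B m) (idx m) hs)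
      refine ⟨?_, ?_, ?_⟩
      · rw [hB1, hsc]
        exact update_linearIndependent hli (idx m) c hc0
      · intro j
        rw [hB1]
        by_cases h : j = idx m
        · subst h
          rw [Function.update_self]
          exact sub_mem_lattice (hmem _) hsub
        · rw [Function.update_of_ne h]
          exact hmem j
      · intro i
        rw [Finset.range_add_one, Finset.filter_insert]
        by_cases h : idx m = i
        · subst h
          have hnotmem : m ∉ (Finset.range m).filter fun t => idx t = idx m := by
            simp
          rw [if_pos rfl, Finset.card_insert_of_notMem hnotmem, hB1,
            Function.update_self, pow_succ]
          calc ‖B m (idx m) - s m‖ ^ 2 ≤ τ * ‖B m (idx m)‖ ^ 2 := le_of_lt hdec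
            _ ≤ τ * (τ ^ (((Finset.range m).filter fun t => idx t = idx m).card)
                * ‖B 0 (idx m)‖ ^ 2) := by
              exact mul_le_mul_of_nonneg_left (hnorm (idx m)) (le_of_lt hτ0)
            _ = τ ^ (((Finset.range m).filter fun t => idx t = idx m).card) * τ
                * ‖B 0 (idx m)‖ ^ 2 := by ring
        · rw [if_neg h, hB1, Function.update_of_ne (fun hx => h hx.symm)]
          exact hnorm i
  obtain ⟨hliM, hmemM, hnormM⟩ := key M le_rfl
  have part1 : ∀ i : Fin n,
      ((((Finset.range M).filter fun m => idx m = i).card : ℝ) ≤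
        Real.logb (1 / τ) (‖B 0 i‖ ^ 2 / succMin (B 0) 1 ^ 2)) := by
    intro i
    set k := ((Finset.range M).filter fun m => idx m = i).card with hk
    have hlam : 0 < succMin (B 0) 1 := succMin_one_pos hlin i
    have h1 : succMin (B 0) 1 ≤ ‖B M i‖ := succMin_one_le (hmemM i) (hliM.ne_zero i)
    have h2 : succMin (B 0) 1 ^ 2 ≤ τ ^ k * ‖B 0 i‖ ^ 2 :=
      le_trans (pow_le_pow_left₀ hlam.le h1 2) (hnormM i)
    have h3 : (1 / τ) ^ k ≤ ‖B 0 i‖ ^ 2 / succMin (B 0) 1 ^ 2 := by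
      rw [div_pow, one_pow, div_le_div_iff₀ (pow_pos hτ0 k) (pow_pos hlam 2)]
      nlinarith [pow_pos hτ0 k]
    calc (k : ℝ) = Real.logb (1 / τ) ((1 / τ) ^ k) := by
          rw [Real.logb_pow, Real.logb_self_eq_one hb, mul_one]
      _ ≤ Real.logb (1 / τ) (‖B 0 i‖ ^ 2 / succMin (B 0) 1 ^ 2) :=
          Real.logb_le_logb_of_le hb (pow_pos (by positivity) k) h3
  refine ⟨part1, ?_⟩
  have hMcard : (M : ℝ) = ∑ i : Fin n, (((Finset.range M).filter fun m => idx m = i).card : ℝ) := by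
    rw [← Nat.cast_sum]
    norm_cast
    simpa using Finset.card_eq_sum_card_fiberwise
      (f := idx) (s := Finset.range M) (t := Finset.univ) (fun x _ => Finset.mem_univ _)
  rw [hMcard]
  exact Finset.sum_le_sum fun i _ => part1 i
end
end

section
/- Let B = [b_1,…,b_n] be an SR-CVP reduced basis of a full-rank lattice Λ(B) in ℝ^n, and suppose v = Σ_{i=1}^n c_i b_i (c_i ∈ ℤ) is a shortest nonzero vector of Λ(B), i.e., ‖v‖ = λ_1(B), with c_k = ±1 for some index k. Then ‖b_k‖ = λ_1(B); i.e., the reduced basis itself contains a vector achieving the first successive minimum. -/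
open Finset

noncomputable section

theorem srcvp_contains_shortest_vector {n : ℕ}
    (B : Fin n → Euc n) (hB : LinearIndependent ℝ B) (hred : SRCVPReduced B)
    (c : Fin n → ℤ) (v : Euc n) (hv : v = ∑ i, (c i : ℝ) • B i)
    (hshort : ‖v‖ = succMin B 1) (k : Fin n) (hck : c k = 1 ∨ c k = -1) :
    ‖B k‖ = succMin B 1 := by
  have hkk : (c k : ℝ) * (c k : ℝ) = 1 := by rcases hck with h | h <;> simp [h]
  -- succMin B 1 ≤ ‖B k‖
  have hle : succMin B 1 ≤ ‖B k‖ := by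
    apply csInf_le
    · refine ⟨0, fun r hr => ?_⟩
      obtain ⟨w, _, _, hle⟩ := hr
      exact le_trans (norm_nonneg _) (hle 0)
    · refine ⟨fun _ => B k, fun j => ⟨fun j' => if j' = k then 1 else 0, ?_⟩, ?_, fun j => le_rfl⟩
      · simp [apply_ite (fun (z : ℤ) => (z : ℝ))]
      · exact linearIndependent_unique_iff.mpr (hB.ne_zero k)
  -- ‖B k‖ ≤ ‖v‖
  set d : Fin n → ℤ := fun j => if j = k then 0 else -(c k * c j) with hd
  have hs : (∑ j, (d j : ℝ) • B j) ∈ subLattice B k := ⟨d, by simp [hd], rfl⟩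
  have key : B k - ∑ j, (d j : ℝ) • B j = (c k : ℝ) • v := by
    have hBk : B k = ∑ j, (if j = k then (1:ℝ) else 0) • B j := by simp
    rw [hv, Finset.smul_sum, hBk, ← Finset.sum_sub_distrib]
    refine Finset.sum_congr rfl fun j _ => ?_
    rw [← sub_smul, smul_smul]
    congr 1
    by_cases h : j = k
    · subst h; simp [hd, hkk]
    · simp [hd, h]
  have hred' := hred k _ hs
  rw [key] at hred'
  have hnorm : ‖(c k : ℝ) • v‖ = ‖v‖ := by
    rw [norm_smul]
    rcases hck with h | h <;> simp [h]
  rw [hnorm, hshort] at hred'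
  linarith

end
end
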